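/- Let G and H be nonzero additive subgroups of ℝ, each equipped with the linear order induced from ℝ. Then there exists an order isomorphism (an additive group isomorphism φ : G → H with x ≤ y ⇔ φ(x) ≤ φ(y)) between G and H if and only if there exists a real number t > 0 with H = t · G = {t x : x ∈ G}. -/

import Mathlib

private lemma rat_le_ext_aux {a b : ℝ} (h : ∀ q : ℚ, (q:ℝ) ≤ a ↔ (q:ℝ) ≤ b) : a = b := by
  by_contra hne
  rcases lt_or_gt_of_ne hne with hlt | hlt
  · obtain ⟨q, hq1, hq2⟩ := exists_rat_btwn hlt
    exact absurd ((h q).2 hq2.le) (not_le.2 hq1)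
  · obtain ⟨q, hq1, hq2⟩ := exists_rat_btwn hlt
    exact absurd ((h q).1 hq2.le) (not_le.2 hq1)

/-- Two nonzero subgroups of `ℝ` (with the induced order) are order isomorphic
iff one is a positive scalar multiple of the other. -/
theorem stmt_8 (G H : AddSubgroup ℝ) (hG : G ≠ ⊥) (hH : H ≠ ⊥) :
    (∃ φ : G ≃+ H, ∀ x y : G, x ≤ y ↔ φ x ≤ φ y) ↔
    (∃ t : ℝ, 0 < t ∧ (H : Set ℝ) = (fun x : ℝ => t * x) '' (G : Set ℝ)) := by
  constructor
  · rintro ⟨φ, hφ⟩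
    -- pick a positive element of G
    obtain ⟨a, ha⟩ := AddSubgroup.ne_bot_iff_exists_ne_zero.mp hG
    have ha' : (a:ℝ) ≠ 0 := by
      exact fun hc => ha (by ext; exact hc)
    set x0 : G := if (0:ℝ) < (a:ℝ) then a else -a with hx0def
    have hx0 : (0:ℝ) < (x0:ℝ) := by
      rw [hx0def]
      split_ifs with h
      · exact h
      · have h2 : (a:ℝ) < 0 := lt_of_le_of_ne (not_lt.mp h) ha'
        push_cast
        linarith
    -- φ preserves positivity
    have hposmap : ∀ x : G, (0:ℝ) < (x:ℝ) → (0:ℝ) < (φ x : ℝ) := by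
      intro x hx
      have h1 : φ 0 ≤ φ x := (hφ 0 x).mp (by exact_mod_cast hx.le)
      rw [map_zero] at h1
      have h2 : φ x ≠ 0 := by
        intro hc
        have : x = 0 := by
          apply φ.injective; rw [hc, map_zero]
        rw [this] at hx; simp at hx
      have h1' : (0:ℝ) ≤ (φ x : ℝ) := by exact_mod_cast h1
      cases' lt_or_eq_of_le h1' with h' h'
      · exact h'
      · exact absurd (by ext; exact h'.symm) h2
    have hφx0 : (0:ℝ) < (φ x0 : ℝ) := hposmap x0 hx0
    set t : ℝ := (φ x0 : ℝ) / (x0 : ℝ) with htdef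
    have ht : 0 < t := div_pos hφx0 hx0
    -- integer comparison transfer
    have hm : ∀ (m n : ℤ) (y : G), (m:ℝ) * x0 ≤ (n:ℝ) * y ↔
        (m:ℝ) * (φ x0 : ℝ) ≤ (n:ℝ) * (φ y : ℝ) := by
      intro m n y
      have h := hφ (m • x0) (n • y)
      rw [map_zsmul, map_zsmul] at h
      simpa [← Subtype.coe_le_coe, zsmul_eq_mul] using h
    -- φ is multiplication by t
    have key : ∀ y : G, (φ y : ℝ) = t * y := by
      intro y
      have hratio : (y:ℝ) / (x0:ℝ) = (φ y : ℝ) / (φ x0 : ℝ) := by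
        apply rat_le_ext_aux
        intro q
        rw [le_div_iff₀ hx0, le_div_iff₀ hφx0]
        have hden : (0:ℝ) < (q.den : ℝ) := by exact_mod_cast q.pos
        have hq : (q:ℝ) = (q.num : ℝ) / (q.den : ℝ) := by rw [Rat.cast_def]
        have h1 : ∀ z : ℝ, 0 < z → ∀ w : ℝ,
            ((q:ℝ) * z ≤ w ↔ (q.num:ℝ) * z ≤ (q.den:ℝ) * w) := by
          intro z hz w
          rw [hq, div_mul_eq_mul_div, div_le_iff₀ hden, mul_comm w]
        rw [h1 _ hx0 _, h1 _ hφx0 _]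
        have := hm q.num (q.den : ℤ) y
        push_cast at this
        exact this
      field_simp at hratio
      rw [htdef]
      field_simp
      linarith [hratio]
    refine ⟨t, ht, ?_⟩
    ext z
    simp only [Set.mem_image, SetLike.mem_coe]
    constructor
    · intro hz
      refine ⟨(φ.symm ⟨z, hz⟩ : G), (φ.symm ⟨z, hz⟩).2, ?_⟩
      have := key (φ.symm ⟨z, hz⟩)
      rw [φ.apply_symm_apply] at this
      exact this.symm
    · rintro ⟨g, hg, rfl⟩
      have := key ⟨g, hg⟩
      rw [← this]
      exact (φ ⟨g, hg⟩).2
  · rintro ⟨t, ht, hHt⟩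
    have hmem : ∀ x : G, t * (x:ℝ) ∈ H := by
      intro x
      rw [← SetLike.mem_coe, hHt]; exact ⟨x, x.2, rfl⟩
    have hmem' : ∀ y : H, (y:ℝ) / t ∈ G := by
      intro y
      have : (y:ℝ) ∈ (H : Set ℝ) := y.2
      rw [hHt] at this
      obtain ⟨g, hg, hgy⟩ := this
      have : (y:ℝ) / t = g := by rw [← hgy]; field_simp
      rw [this]; exact hg
    refine ⟨{ toFun := fun x => ⟨t * x, hmem x⟩,
              invFun := fun y => ⟨(y:ℝ) / t, hmem' y⟩,
              left_inv := ?_, right_inv := ?_, map_add' := ?_ }, ?_⟩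
    · intro x; ext; field_simp
    · intro y; ext; field_simp
    · intro x y; ext; push_cast; ring
    · intro x y
      simp only [AddEquiv.coe_mk, Equiv.coe_fn_mk]
      rw [← Subtype.coe_le_coe, ← Subtype.coe_le_coe]
      exact (mul_le_mul_iff_right₀ ht).symm
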